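/- Let K be a field of characteristic different from 2, let D ∈ K[X] have even degree 2d with d ≥ 1 and leading coefficient a square in K, and let δ ∈ K((T)) satisfy δ² = ι D. Let A ∈ K[X] be the polynomial part of δ, i.e. the unique polynomial with orderTop(δ − ι A) > 0. Let t, s ∈ K[X] with s ≠ 0, and set α = (ι(A + t) + δ)·(ι s)⁻¹ and α* = (ι(A + t) − δ)·(ι s)⁻¹. Then (orderTop α* > 0 and orderTop α < 0) holds if and only if (deg t < deg s and deg s < d). Moreover, in that case orderTop α = deg s − d. -/

import Mathlib

open Polynomial

/-- The ring homomorphism `K[X] → K((T))` sending `X` to `T⁻¹`. -/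
noncomputable def iota {K : Type*} [Field K] : Polynomial K →+* LaurentSeries K :=
  Polynomial.eval₂RingHom (HahnSeries.C : K →+* LaurentSeries K)
    (HahnSeries.single (-1 : ℤ) (1 : K))

namespace SigmaRedAux

variable {K : Type*} [Field K]

lemma iota_apply (f : Polynomial K) :
    iota f = f.sum fun i a => HahnSeries.single (-(i : ℤ)) a := by
  rw [iota, coe_eval₂RingHom, Polynomial.eval₂_eq_sum, Polynomial.sum_def, Polynomial.sum_def]
  refine Finset.sum_congr rfl fun i _ => ?_
  beta_reduce
  rw [HahnSeries.single_pow, one_pow, show (i • (-1 : ℤ)) = -(i : ℤ) by simp,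
    show (HahnSeries.C (f.coeff i) : LaurentSeries K) = HahnSeries.single (0 : ℤ) (f.coeff i)
      from rfl,
    HahnSeries.single_mul_single, zero_add, mul_one]

lemma iota_coeff_neg (f : Polynomial K) (n : ℕ) :
    (iota f).coeff (-(n : ℤ)) = f.coeff n := by
  have hm := map_sum (HahnSeries.coeff.addMonoidHom (-(n : ℤ)))
    (fun i : ℕ => HahnSeries.single (-(i : ℤ)) (f.coeff i)) f.support
  simp only [HahnSeries.coeff.addMonoidHom, AddMonoidHom.coe_mk, ZeroHom.coe_mk] at hm
  rw [iota_apply, Polynomial.sum_def, hm]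
  have : ∀ i ∈ f.support,
      (HahnSeries.single (-(i : ℤ)) (f.coeff i)).coeff (-(n : ℤ))
        = if i = n then f.coeff i else 0 := by
    intro i _
    rw [HahnSeries.coeff_single]
    simp [eq_comm]
  rw [Finset.sum_congr rfl this, Finset.sum_ite_eq' f.support n]
  split_ifs with h
  · rfl
  · exact (Polynomial.notMem_support_iff.mp h).symm

lemma iota_coeff_of_lt (f : Polynomial K) {g : ℤ} (hg : g < -(f.natDegree : ℤ)) :
    (iota f).coeff g = 0 := by
  have hm := map_sum (HahnSeries.coeff.addMonoidHom g)
    (fun i : ℕ => HahnSeries.single (-(i : ℤ)) (f.coeff i)) f.support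
  simp only [HahnSeries.coeff.addMonoidHom, AddMonoidHom.coe_mk, ZeroHom.coe_mk] at hm
  rw [iota_apply, Polynomial.sum_def, hm]
  refine Finset.sum_eq_zero fun i hi => ?_
  have hile : (i : ℤ) ≤ (f.natDegree : ℤ) := by
    exact_mod_cast Polynomial.le_natDegree_of_mem_supp i hi
  have : g ≠ -(i : ℤ) := by omega
  exact HahnSeries.coeff_single_of_ne this

lemma orderTop_iota {f : Polynomial K} (hf : f ≠ 0) :
    (iota f).orderTop = ((-(f.natDegree : ℤ) : ℤ) : WithTop ℤ) := by
  refine le_antisymm (HahnSeries.orderTop_le_of_coeff_ne_zero ?_) ?_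
  · rw [iota_coeff_neg]
    exact Polynomial.leadingCoeff_ne_zero.mpr hf
  · by_contra h
    push_neg at h
    obtain ⟨g, hg1, hg2⟩ := WithTop.lt_iff_exists_coe.mp h
    exact HahnSeries.coeff_orderTop_ne hg1
      (iota_coeff_of_lt f (WithTop.coe_lt_coe.mp hg2))

lemma iota_ne_zero {f : Polynomial K} (hf : f ≠ 0) : iota f ≠ 0 :=
  HahnSeries.orderTop_ne_top.mp (by rw [orderTop_iota hf]; exact WithTop.coe_ne_top)

lemma order_iota {f : Polynomial K} (hf : f ≠ 0) :
    (iota f).order = -(f.natDegree : ℤ) := by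
  have := HahnSeries.order_eq_orderTop_of_ne_zero (iota_ne_zero hf)
  rw [orderTop_iota hf] at this
  exact_mod_cast this

lemma order_inv {x : LaurentSeries K} (hx : x ≠ 0) : (x⁻¹).order = -x.order := by
  have h := HahnSeries.order_mul hx (inv_ne_zero hx)
  rw [mul_inv_cancel₀ hx, HahnSeries.order_one] at h
  omega

lemma orderTop_mul' {x y : LaurentSeries K} (hy : y ≠ 0) :
    (x * y).orderTop = x.orderTop + ((y.order : ℤ) : WithTop ℤ) := by
  by_cases hx : x = 0
  · simp [hx]
  rw [← HahnSeries.order_eq_orderTop_of_ne_zero hx,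
    ← HahnSeries.order_eq_orderTop_of_ne_zero (mul_ne_zero hx hy),
    HahnSeries.order_mul hx hy, ← WithTop.coe_add]

end SigmaRedAux

lemma orderTop_C_mul {K : Type*} [Field K] {c : K} (hc : c ≠ 0) (x : LaurentSeries K) :
    ((HahnSeries.C c : LaurentSeries K) * x).orderTop = x.orderTop := by
  by_cases hx : x = 0
  · simp [hx]
  · rw [← HahnSeries.order_eq_orderTop_of_ne_zero hx,
      ← HahnSeries.order_eq_orderTop_of_ne_zero (mul_ne_zero (HahnSeries.C_ne_zero hc) hx),
      HahnSeries.order_mul (HahnSeries.C_ne_zero hc) hx, HahnSeries.order_C, zero_add]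

open SigmaRedAux

/-- `α = (ι(A + t) + δ)/ι s` is σ-reduced (i.e. `orderTop α* > 0 > orderTop α`, where `α*` is
the conjugate) iff `deg t < deg s < d`; in that case `orderTop α = deg s - d`. -/
theorem sigma_reduced_degree_criterion {K : Type*} [Field K] (h2 : (2 : K) ≠ 0)
    (D : Polynomial K) (d : ℕ) (hd : 1 ≤ d) (hdeg : D.degree = (2 * d : ℕ))
    (hlc : ∃ c : K, D.leadingCoeff = c ^ 2)
    (δ : LaurentSeries K) (hδ : δ ^ 2 = iota D)
    (A : Polynomial K) (hA : 0 < (δ - iota A).orderTop)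
    (t s : Polynomial K) (hs : s ≠ 0) :
    ((0 < ((iota (A + t) - δ) * (iota s)⁻¹).orderTop ∧
        ((iota (A + t) + δ) * (iota s)⁻¹).orderTop < 0) ↔
      (t.degree < s.degree ∧ s.natDegree < d)) ∧
    (t.degree < s.degree → s.natDegree < d →
      ((iota (A + t) + δ) * (iota s)⁻¹).orderTop = (((s.natDegree : ℤ) - d : ℤ) : WithTop ℤ)) := by
  have hD : D ≠ 0 := fun h => by
    rw [Polynomial.degree_eq_bot.mpr h] at hdeg
    exact absurd hdeg.symm (by exact_mod_cast (WithBot.coe_ne_bot (a := (2 * d : ℕ))))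
  have hιs : iota s ≠ 0 := iota_ne_zero hs
  have hδ0 : δ ≠ 0 := by
    intro h
    rw [h] at hδ
    exact iota_ne_zero hD (by simpa using hδ.symm)
  have hnD : D.natDegree = 2 * d := Polynomial.natDegree_eq_of_degree_eq_some hdeg
  have hordD : (iota D).order = -(2 * d : ℤ) := by
    rw [order_iota hD, hnD]; push_cast; ring
  have hordδ : δ.order = -(d : ℤ) := by
    have h := HahnSeries.order_pow δ 2
    rw [hδ, hordD] at h
    have h2' : (2 : ℕ) • δ.order = 2 * δ.order := by
      rw [nsmul_eq_mul]; push_cast; ring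
    omega
  have hδtop : δ.orderTop = ((-(d : ℤ) : ℤ) : WithTop ℤ) := by
    rw [← HahnSeries.order_eq_orderTop_of_ne_zero hδ0, hordδ]
  have hdneg : ((-(d : ℤ) : ℤ) : WithTop ℤ) < 0 :=
    by exact_mod_cast (show -(d : ℤ) < 0 by omega)
  -- orderTop of iota A + δ
  have hw : (iota A + δ).orderTop = ((-(d : ℤ) : ℤ) : WithTop ℤ) := by
    have heq : iota A + δ = (HahnSeries.C (2 : K) : LaurentSeries K) * δ - (δ - iota A) := by
      rw [HahnSeries.C_mul_eq_smul, two_smul]; ring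
    rw [heq, HahnSeries.orderTop_sub, orderTop_C_mul h2, hδtop]
    rw [orderTop_C_mul h2, hδtop]
    exact lt_trans hdneg hA
  -- multiplying by (iota s)⁻¹ adds natDegree s to orderTop
  have key : ∀ x : LaurentSeries K,
      (x * (iota s)⁻¹).orderTop = x.orderTop + ((s.natDegree : ℤ) : WithTop ℤ) := fun x => by
    rw [orderTop_mul' (inv_ne_zero hιs), order_inv hιs, order_iota hs, neg_neg]
  -- the conjugate numerator
  have hueq : iota (A + t) - δ = iota t - (δ - iota A) := by rw [map_add]; ring
  have hveq : iota (A + t) + δ = iota t + (iota A + δ) := by rw [map_add]; ring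
  have hu : t ≠ 0 →
      (iota (A + t) - δ).orderTop = ((-(t.natDegree : ℤ) : ℤ) : WithTop ℤ) := by
    intro ht
    rw [hueq, HahnSeries.orderTop_sub, orderTop_iota ht]
    rw [orderTop_iota ht]
    refine lt_of_le_of_lt ?_ hA
    exact_mod_cast (show -(t.natDegree : ℤ) ≤ 0 by omega)
  have hvsmall : (t = 0 ∨ t.natDegree < d) →
      (iota (A + t) + δ).orderTop = ((-(d : ℤ) : ℤ) : WithTop ℤ) := by
    intro ht
    rw [hveq, HahnSeries.orderTop_add_eq_right, hw]
    by_cases ht0 : t = 0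
    · rw [ht0, map_zero, HahnSeries.orderTop_zero, hw]
      exact lt_of_lt_of_le hdneg le_top
    · have htd : t.natDegree < d := by
        rcases ht with rfl | h
        · exact absurd rfl ht0
        · exact h
      rw [orderTop_iota ht0, hw]
      exact_mod_cast (show -(d : ℤ) < -(t.natDegree : ℤ) by omega)
  -- degree inequality translation
  have hts : t.degree < s.degree ↔ (t = 0 ∨ t.natDegree < s.natDegree) := by
    constructor
    · intro h
      by_cases ht : t = 0
      · exact Or.inl ht
      · exact Or.inr ((Polynomial.natDegree_lt_natDegree_iff ht).mpr h)
    · rintro (rfl | h)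
      · rw [Polynomial.degree_zero]
        exact bot_lt_iff_ne_bot.mpr (by rw [Ne, Polynomial.degree_eq_bot]; exact hs)
      · by_cases ht : t = 0
        · rw [ht, Polynomial.degree_zero]
          exact bot_lt_iff_ne_bot.mpr (by rw [Ne, Polynomial.degree_eq_bot]; exact hs)
        · exact (Polynomial.natDegree_lt_natDegree_iff ht).mp h
  constructor
  · constructor
    · rintro ⟨H1, H2⟩
      rw [key] at H1 H2
      -- first: t.degree < s.degree
      have hdts : t.degree < s.degree := by
        rw [hts]
        by_cases ht : t = 0
        · exact Or.inl ht
        · refine Or.inr ?_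
          rw [hu ht, ← WithTop.coe_add] at H1
          have := WithTop.coe_lt_coe.mp (by exact_mod_cast H1 :
            ((0 : ℤ) : WithTop ℤ) < ((-(t.natDegree : ℤ) + s.natDegree : ℤ) : WithTop ℤ))
          omega
      refine ⟨hdts, ?_⟩
      -- second: s.natDegree < d
      by_cases hsmall : t = 0 ∨ t.natDegree < d
      · rw [hvsmall hsmall, ← WithTop.coe_add] at H2
        have := WithTop.coe_lt_coe.mp (by exact_mod_cast H2 :
          ((-(d : ℤ) + s.natDegree : ℤ) : WithTop ℤ) < ((0 : ℤ) : WithTop ℤ))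
        omega
      · exfalso
        push_neg at hsmall
        obtain ⟨ht, hdt⟩ := hsmall
        have htlt : t.natDegree < s.natDegree := by
          rcases hts.mp hdts with rfl | h
          · exact absurd rfl ht
          · exact h
        -- orderTop v ≥ -natDegree t
        have hmin : ((-(t.natDegree : ℤ) : ℤ) : WithTop ℤ) ≤ (iota (A + t) + δ).orderTop := by
          rw [hveq]
          refine le_trans ?_ HahnSeries.min_orderTop_le_orderTop_add
          rw [orderTop_iota ht, hw, le_min_iff]
          constructor
          · exact le_refl _
          · exact_mod_cast (show -(t.natDegree : ℤ) ≤ -(d : ℤ) by omega)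
        have : ((-(t.natDegree : ℤ) + s.natDegree : ℤ) : WithTop ℤ) <
            ((-(t.natDegree : ℤ) + s.natDegree : ℤ) : WithTop ℤ) := by
          calc ((-(t.natDegree : ℤ) + s.natDegree : ℤ) : WithTop ℤ)
              ≤ (iota (A + t) + δ).orderTop + ((s.natDegree : ℤ) : WithTop ℤ) := by
                rw [WithTop.coe_add]
                exact add_le_add_left hmin _
            _ < 0 := H2
            _ < ((-(t.natDegree : ℤ) + s.natDegree : ℤ) : WithTop ℤ) := by
                exact_mod_cast (show (0 : ℤ) < -(t.natDegree : ℤ) + s.natDegree by omega)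
        exact lt_irrefl _ this
    · rintro ⟨hdts, hsd⟩
      have htlt : t = 0 ∨ t.natDegree < d := by
        rcases hts.mp hdts with rfl | h
        · exact Or.inl rfl
        · exact Or.inr (by omega)
      constructor
      · rw [key]
        by_cases ht : t = 0
        · subst ht
          rw [map_add, map_zero, add_zero]
          have : (iota A - δ).orderTop = (δ - iota A).orderTop := by
            rw [← HahnSeries.orderTop_neg (x := iota A - δ)]
            congr 1
            ring
          rw [this]
          calc (0 : WithTop ℤ) < (δ - iota A).orderTop := hA
            _ ≤ (δ - iota A).orderTop + ((s.natDegree : ℤ) : WithTop ℤ) := by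
                exact le_add_of_nonneg_right
                  (by exact_mod_cast (show (0:ℤ) ≤ (s.natDegree : ℤ) by omega))
        · have h : t.natDegree < s.natDegree := by
            rcases hts.mp hdts with rfl | h
            · exact absurd rfl ht
            · exact h
          rw [hu ht, ← WithTop.coe_add]
          exact_mod_cast (show (0 : ℤ) < -(t.natDegree : ℤ) + s.natDegree by omega)
      · rw [key, hvsmall htlt, ← WithTop.coe_add]
        exact_mod_cast (show (-(d : ℤ) + s.natDegree : ℤ) < 0 by omega)
  · intro hdts hsd
    have htlt : t = 0 ∨ t.natDegree < d := by
      rcases hts.mp hdts with rfl | h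
      · exact Or.inl rfl
      · exact Or.inr (by omega)
    rw [key, hvsmall htlt, ← WithTop.coe_add]
    congr 1
    ring
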